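/- Let v > 0 and let μ, λ : [0,∞) → ℝ be continuous, nonnegative, with support in [0,R₀]. Any C¹ solution ρ : [0,∞) → ℝ of v ρ'(r) − μ(r)ρ(r) + λ(r) = 0 with ∫₀^∞ ρ(r)dr < ∞ and ρ ≥ 0 satisfies ρ(0) = v⁻¹∫₀^∞ λ(x) exp(−(1/v)∫₀ˣ μ(y)dy)dx. -/

import Mathlib

open Real MeasureTheory Set

/-- A nonnegative C¹ solution of `v ρ' − μ ρ + λ = 0` on `[0,∞)` with finite total mass
must have the critical boundary value
`ρ(0) = v⁻¹ ∫₀^∞ λ(x) exp(−(1/v)∫₀ˣ μ) dx`. -/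
theorem finite_mass_forces_critical_boundary_value
    (v R₀ : ℝ) (hv : 0 < v) (hR₀ : 0 < R₀)
    (μ lam : ℝ → ℝ)
    (hμc : Continuous μ) (hlc : Continuous lam)
    (hμ0 : ∀ r, 0 ≤ μ r) (hl0 : ∀ r, 0 ≤ lam r)
    (hμs : ∀ r, r ∉ Icc (0:ℝ) R₀ → μ r = 0)
    (hls : ∀ r, r ∉ Icc (0:ℝ) R₀ → lam r = 0)
    (ρ : ℝ → ℝ) (hρ : ContDiff ℝ 1 ρ)
    (hode : ∀ r, 0 ≤ r → v * deriv ρ r - μ r * ρ r + lam r = 0)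
    (hmass : IntegrableOn ρ (Ioi (0:ℝ)))
    (hρ0 : ∀ r, 0 ≤ r → 0 ≤ ρ r) :
    ρ 0 = v⁻¹ * ∫ x in Ioi (0:ℝ),
      lam x * Real.exp (-(1 / v) * ∫ y in (0:ℝ)..x, μ y) := by
  have hρcont : Continuous ρ := hρ.continuous
  have hρd : ∀ r : ℝ, HasDerivAt ρ (deriv ρ r) r := fun r =>
    ((hρ.differentiable one_ne_zero) r).hasDerivAt
  set F : ℝ → ℝ := fun x => ∫ y in (0:ℝ)..x, μ y with hFdef
  have hFderiv : ∀ x : ℝ, HasDerivAt F (μ x) x := by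
    intro x
    exact intervalIntegral.integral_hasDerivAt_right (hμc.intervalIntegrable _ _)
      (hμc.stronglyMeasurableAtFilter _ _) hμc.continuousAt
  set E : ℝ → ℝ := fun x => Real.exp (-(1 / v) * F x) with hEdef
  have hEderiv : ∀ x : ℝ, HasDerivAt E (E x * (-(1 / v) * μ x)) x := by
    intro x
    have := ((hFderiv x).const_mul (-(1 / v))).exp
    simpa [hEdef, mul_comm] using this
  have hEcont : Continuous E := by
    apply Real.continuous_exp.comp
    exact (continuous_const.mul (intervalIntegral.continuous_primitive
      (fun a b => hμc.intervalIntegrable a b) 0))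
  -- ρ is eventually constant
  have hderiv0 : ∀ r : ℝ, R₀ < r → deriv ρ r = 0 := by
    intro r hr
    have hnot : r ∉ Icc (0:ℝ) R₀ := fun h => absurd h.2 (not_le.mpr hr)
    have := hode r (le_of_lt (lt_trans hR₀ hr))
    rw [hμs r hnot, hls r hnot] at this
    have : v * deriv ρ r = 0 := by linarith
    exact (mul_eq_zero.mp this).resolve_left (ne_of_gt hv)
  have hconst : ∀ a b : ℝ, R₀ < a → a ≤ b → ρ b = ρ a := by
    intro a b ha hab
    have h0 : ∫ x in a..b, (0:ℝ) = ρ b - ρ a := by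
      apply intervalIntegral.integral_eq_sub_of_hasDerivAt
      · intro x hx
        rw [uIcc_of_le hab] at hx
        have : deriv ρ x = 0 := hderiv0 x (lt_of_lt_of_le ha hx.1)
        simpa [this] using hρd x
      · exact intervalIntegrable_const
    simp at h0
    linarith
  have hc : ∀ r : ℝ, R₀ < r → ρ r = ρ (R₀ + 1) := by
    intro r hr
    rcases le_total r (R₀ + 1) with h | h
    · exact (hconst r (R₀ + 1) hr h).symm
    · exact hconst (R₀ + 1) r (by linarith) h
  have hc0 : ρ (R₀ + 1) = 0 := by
    have hsub : Ioi (R₀ + 1) ⊆ Ioi (0:ℝ) := Ioi_subset_Ioi (by linarith)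
    have hint : IntegrableOn ρ (Ioi (R₀ + 1)) := hmass.mono_set hsub
    have hint' : IntegrableOn (fun _ : ℝ => ρ (R₀ + 1)) (Ioi (R₀ + 1)) := by
      apply hint.congr_fun _ measurableSet_Ioi
      intro x hx
      exact hc x (by simpa using lt_trans (by linarith) hx)
    rcases ((integrableOn_const_iff (by simp)).mp hint') with h | h
    · exact enorm_eq_zero.mp h
    · exfalso; rw [Real.volume_Ioi] at h; exact (lt_irrefl _ h).elim
  have hρR₀ : ρ R₀ = 0 := by
    have h1 : Filter.Tendsto ρ (nhdsWithin R₀ (Ioi R₀)) (nhds (ρ R₀)) :=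
      (hρcont.continuousAt).continuousWithinAt
    have h2 : Filter.Tendsto ρ (nhdsWithin R₀ (Ioi R₀)) (nhds 0) := by
      apply Filter.Tendsto.congr' _ tendsto_const_nhds
      filter_upwards [self_mem_nhdsWithin] with x hx
      rw [hc x hx, hc0]
    exact tendsto_nhds_unique h1 h2
  -- integrate the ODE on [0, R₀]
  have hFTC : ∫ x in (0:ℝ)..R₀, (-(1 / v) * (lam x * E x)) = ρ R₀ * E R₀ - ρ 0 * E 0 := by
    apply intervalIntegral.integral_eq_sub_of_hasDerivAt
    · intro x hx
      rw [uIcc_of_le hR₀.le] at hx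
      have hode' := hode x hx.1
      have hd : HasDerivAt (fun r => ρ r * E r)
          (deriv ρ x * E x + ρ x * (E x * (-(1 / v) * μ x))) x :=
        (hρd x).mul (hEderiv x)
      have heq : deriv ρ x * E x + ρ x * (E x * (-(1 / v) * μ x))
          = -(1 / v) * (lam x * E x) := by
        have hdval : deriv ρ x = (μ x * ρ x - lam x) / v := by
          field_simp
          linarith
        rw [hdval]
        field_simp
        ring
      rw [heq] at hd
      exact hd
    · exact (continuous_const.mul (hlc.mul hEcont)).intervalIntegrable _ _
  have hE0 : E 0 = 1 := by simp [hEdef, hFdef]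
  have hFTC' : ρ 0 = (1 / v) * ∫ x in (0:ℝ)..R₀, lam x * E x := by
    rw [intervalIntegral.integral_const_mul] at hFTC
    rw [hρR₀, hE0] at hFTC
    have : -(1 / v) * ∫ x in (0:ℝ)..R₀, lam x * E x = -ρ 0 := by linarith
    linarith
  -- the integral over Ioi 0 equals the integral over (0, R₀]
  have hintE : ∫ x in Ioi (0:ℝ), lam x * E x = ∫ x in (0:ℝ)..R₀, lam x * E x := by
    rw [intervalIntegral.integral_of_le hR₀.le]
    have h1 : ∫ x in Ioi (0:ℝ), lam x * E x
        = ∫ x in Ioi (0:ℝ), (Ioc (0:ℝ) R₀).indicator (fun x => lam x * E x) x := by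
      apply setIntegral_congr_fun measurableSet_Ioi
      intro x hx
      by_cases hxR : x ≤ R₀
      · rw [indicator_of_mem (by exact ⟨hx, hxR⟩)]
      · rw [indicator_of_notMem (fun h => hxR h.2)]
        have : lam x = 0 := hls x (fun h => hxR h.2)
        simp [this]
    rw [h1, setIntegral_indicator measurableSet_Ioc,
      inter_eq_self_of_subset_right Ioc_subset_Ioi_self]
  rw [hintE]
  rw [hFTC']
  ring
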